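/- arXiv:1910.06557 — 4 statements merged into one kernel-verified Lean document; each statement's English description precedes it below -/
import Mathlib

section
/- Let $V$ be a $3$-dimensional oriented real inner product space and $W \subset V$ a $2$-dimensional linear subspace. Then every linear map $L : W \to V$ can be uniquely written as $L = A + S$, where $A : W \to W$ is self-adjoint (as an endomorphism of $W$ with the induced inner product, followed by the inclusion $W \subset V$) and $S : W \to V$ has the form $S(w) = v \times w$ for some fixed $v \in V$, where $\times$ is the cross product of $V$. -/
open scoped BigOperators
open Matrix

private lemma cross3_cross (a b c : Fin 3 → ℝ) :
    (a ⨯₃ b) ⨯₃ c = (a ⬝ᵥ c) • b - (b ⬝ᵥ c) • a := by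
  ext i
  fin_cases i <;>
    simp [cross_apply, dotProduct, Fin.sum_univ_three] <;> ring

private lemma exists_frame (W : Submodule ℝ (Fin 3 → ℝ)) (hW : Module.finrank ℝ W = 2) :
    ∃ e₀ e₁ : Fin 3 → ℝ, e₀ ∈ W ∧ e₁ ∈ W ∧
      e₀ ⬝ᵥ e₀ = 1 ∧ e₁ ⬝ᵥ e₁ = 1 ∧ e₀ ⬝ᵥ e₁ = 0 ∧
      (∀ x ∈ W, x = (x ⬝ᵥ e₀) • e₀ + (x ⬝ᵥ e₁) • e₁) ∧
      (∀ z : Fin 3 → ℝ, z ⬝ᵥ e₀ = 0 → z ⬝ᵥ e₁ = 0 → z ⬝ᵥ (e₀ ⨯₃ e₁) = 0 → z = 0) := by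
  set E := EuclideanSpace ℝ (Fin 3)
  let W' : Submodule ℝ E := W.comap (WithLp.linearEquiv 2 ℝ (Fin 3 → ℝ)).toLinearMap
  have h2 : Module.finrank ℝ W' = 2 := by
    have := ((WithLp.linearEquiv 2 ℝ (Fin 3 → ℝ)).symm.submoduleMap W).finrank_eq
    rw [← Submodule.comap_equiv_eq_map_symm] at this
    rw [← this]; exact hW
  have hinner : ∀ a b : E, (inner ℝ a b : ℝ) = a.ofLp ⬝ᵥ b.ofLp := by
    intro a b; simp [E, PiLp.inner_apply, dotProduct, mul_comm]
  let C : OrthonormalBasis (Fin 2) ℝ W' := (stdOrthonormalBasis ℝ W').reindex (finCongr h2)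
  have hON := C.orthonormal
  rw [orthonormal_iff_ite] at hON
  set e₀ : Fin 3 → ℝ := ((C 0 : W') : E).ofLp with he0def
  set e₁ : Fin 3 → ℝ := ((C 1 : W') : E).ofLp with he1def
  have hd00 : e₀ ⬝ᵥ e₀ = 1 := by have := hON 0 0; rwa [Submodule.coe_inner, hinner] at this
  have hd11 : e₁ ⬝ᵥ e₁ = 1 := by have := hON 1 1; rwa [Submodule.coe_inner, hinner] at this
  have hd01 : e₀ ⬝ᵥ e₁ = 0 := by
    have := hON 0 1; rwa [Submodule.coe_inner, hinner, if_neg (by decide)] at this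
  have hmem0 : e₀ ∈ W := (C 0).2
  have hmem1 : e₁ ∈ W := (C 1).2
  -- spanning
  have hspan : ∀ x ∈ W, x = (x ⬝ᵥ e₀) • e₀ + (x ⬝ᵥ e₁) • e₁ := by
    intro x hx
    have := C.sum_repr' (⟨WithLp.toLp 2 x, hx⟩ : W')
    have hc := congrArg (fun y : W' => (y : E).ofLp) this
    simp only [Fin.sum_univ_two, Submodule.coe_add, Submodule.coe_smul, WithLp.ofLp_add,
      WithLp.ofLp_smul] at hc
    rw [Submodule.coe_inner, Submodule.coe_inner, hinner, hinner] at hc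
    simp only [WithLp.ofLp_toLp] at hc
    rw [dotProduct_comm x e₀, dotProduct_comm x e₁]
    exact hc.symm
  -- extend to an orthonormal basis of E
  have hcard : Module.finrank ℝ E = Fintype.card (Fin 3) := by
    simp [E, finrank_euclideanSpace]
  have hnorm : ∀ u : E, u.ofLp ⬝ᵥ u.ofLp = 1 → ‖u‖ = 1 := by
    intro u hu
    have : (inner ℝ u u : ℝ) = 1 := by rw [hinner]; exact hu
    have h := real_inner_self_eq_norm_sq u
    nlinarith [norm_nonneg u]
  have hORT : Orthonormal ℝ (Set.restrict ({0, 1} : Set (Fin 3)) ![((C 0 : W') : E), ((C 1 : W') : E), 0]) := by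
    constructor
    · rintro ⟨i, hi⟩
      rcases hi with rfl | hi
      · exact hnorm _ hd00
      · rcases hi with rfl
        exact hnorm _ hd11
    · rintro ⟨i, hi⟩ ⟨j, hj⟩ hne
      have hij : i ≠ j := fun h => hne (by simpa using h)
      have key : ∀ i' j' : Fin 3, i' ∈ ({0,1} : Set (Fin 3)) → j' ∈ ({0,1} : Set (Fin 3)) →
          i' ≠ j' → (inner ℝ ((![((C 0 : W') : E), ((C 1 : W') : E), 0]) i')
            ((![((C 0 : W') : E), ((C 1 : W') : E), 0]) j') : ℝ) = 0 := by
        intro i' j' hi' hj' hij'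
        rcases hi' with rfl | hi'
        · rcases hj' with rfl | hj'
          · exact absurd rfl hij'
          · rcases hj' with rfl
            rw [hinner]
            simpa using hd01
        · rcases hi' with rfl
          rcases hj' with rfl | hj'
          · rw [hinner]
            simpa [dotProduct_comm] using hd01
          · rcases hj' with rfl
            exact absurd rfl hij'
      exact key i j hi hj hij
  obtain ⟨b, hb⟩ := hORT.exists_orthonormalBasis_extension_of_card_eq hcard
  have hb0 : (b 0).ofLp = e₀ := by simpa using congrArg WithLp.ofLp (hb 0 (by simp))
  have hb1 : (b 1).ofLp = e₁ := by simpa using congrArg WithLp.ofLp (hb 1 (by simp))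
  -- completeness
  refine ⟨e₀, e₁, hmem0, hmem1, hd00, hd11, hd01, hspan, ?_⟩
  intro z h0 h1 hn
  set n : Fin 3 → ℝ := e₀ ⨯₃ e₁ with hndef
  have hrep : ∀ u : Fin 3 → ℝ, u ⬝ᵥ e₀ = 0 → u ⬝ᵥ e₁ = 0 →
      u = (((inner ℝ (b 2) (WithLp.toLp 2 u)) : ℝ)) • (b 2).ofLp := by
    intro u hu0 hu1
    have := congrArg WithLp.ofLp (b.sum_repr' (WithLp.toLp 2 u))
    simp only [Fin.sum_univ_three, WithLp.ofLp_add, WithLp.ofLp_smul] at this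
    rw [hinner (b 0), hinner (b 1)] at this
    simp only [WithLp.ofLp_toLp, hb0, hb1] at this
    rw [dotProduct_comm e₀ u, dotProduct_comm e₁ u, hu0, hu1] at this
    simp at this
    exact this.symm
  have hnn : n ⬝ᵥ n = 1 := by
    rw [hndef, cross_dot_cross, hd00, hd11, hd01, dotProduct_comm e₁ e₀, hd01]; ring
  have hne0 : n ⬝ᵥ e₀ = 0 := by rw [dotProduct_comm]; exact dot_self_cross e₀ e₁
  have hne1 : n ⬝ᵥ e₁ = 0 := by rw [dotProduct_comm]; exact dot_cross_self e₀ e₁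
  have hzrep := hrep z h0 h1
  have hnrep := hrep n hne0 hne1
  set c : ℝ := inner ℝ (b 2) (WithLp.toLp 2 n)
  set d : ℝ := inner ℝ (b 2) (WithLp.toLp 2 z)
  have hmm : (0:ℝ) < c * c * ((b 2).ofLp ⬝ᵥ (b 2).ofLp) := by
    have h1 : n ⬝ᵥ n = (c • (b 2).ofLp) ⬝ᵥ (c • (b 2).ofLp) := by
      rw [← hnrep]
    rw [hnn] at h1
    rw [smul_dotProduct, dotProduct_smul, smul_eq_mul, smul_eq_mul] at h1
    nlinarith
  have hzn : z ⬝ᵥ n = d * c * ((b 2).ofLp ⬝ᵥ (b 2).ofLp) := by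
    conv_lhs => rw [hzrep, hnrep]
    rw [smul_dotProduct, dotProduct_smul, smul_eq_mul, smul_eq_mul]; ring
  rw [hn] at hzn
  have hd : d = 0 := by
    have h0' : d * (c * ((b 2).ofLp ⬝ᵥ (b 2).ofLp)) = 0 := by
      rw [← mul_assoc]; exact hzn.symm
    rcases mul_eq_zero.1 h0' with h | h
    · exact h
    · exfalso; rw [mul_assoc, h, mul_zero] at hmm; exact lt_irrefl _ hmm
  rw [hzrep, hd, zero_smul]

private lemma dot_eq_sum (a b : Fin 3 → ℝ) : a ⬝ᵥ b = ∑ i, a i * b i := rfl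

/-- A–S decomposition of a linear map: let `V = ℝ³` with its standard
inner product `dot` and orientation (so that `crossProduct` is the associated cross
product), and let `W ⊆ V` be a 2-dimensional subspace.  Every linear map `L : W → V`
decomposes uniquely as `L = A + S` with `A : W → W` self-adjoint (for the induced inner
product, followed by the inclusion `W ⊆ V`) and `S = (v × ·)` for a fixed `v ∈ V`. -/
theorem exists_unique_selfAdjoint_cross_decomposition
    (W : Submodule ℝ (Fin 3 → ℝ)) (hW : Module.finrank ℝ W = 2)
    (L : W →ₗ[ℝ] (Fin 3 → ℝ)) :
    ∃! p : (W →ₗ[ℝ] W) × (Fin 3 → ℝ),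
      (∀ x y : W, ∑ i, (p.1 x : Fin 3 → ℝ) i * (y : Fin 3 → ℝ) i
          = ∑ i, (x : Fin 3 → ℝ) i * (p.1 y : Fin 3 → ℝ) i) ∧
      (∀ w : W, L w = (p.1 w : Fin 3 → ℝ) + crossProduct p.2 (w : Fin 3 → ℝ)) := by
  classical
  obtain ⟨e₀, e₁, hm0, hm1, hd00, hd11, hd01, hspan, hcomp⟩ := exists_frame W hW
  set n : Fin 3 → ℝ := e₀ ⨯₃ e₁ with hndef
  have hd10 : e₁ ⬝ᵥ e₀ = 0 := by rw [dotProduct_comm]; exact hd01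
  have h0n : e₀ ⬝ᵥ n = 0 := dot_self_cross e₀ e₁
  have h1n : e₁ ⬝ᵥ n = 0 := dot_cross_self e₀ e₁
  have hne0 : n ⬝ᵥ e₀ = 0 := by rw [dotProduct_comm]; exact h0n
  have hne1 : n ⬝ᵥ e₁ = 0 := by rw [dotProduct_comm]; exact h1n
  have hnn : n ⬝ᵥ n = 1 := by
    rw [hndef, cross_dot_cross, hd00, hd11, hd01, hd10]; ring
  have hcne0 : n ⨯₃ e₀ = e₁ := by
    rw [hndef, cross3_cross, hd00, hd10]; simp
  have hcne1 : n ⨯₃ e₁ = -e₀ := by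
    rw [hndef, cross3_cross, hd01, hd11]; simp
  have hc10 : e₁ ⨯₃ e₀ = -n := by rw [hndef, ← cross_anticomm]
  -- full-space representation
  have hfull : ∀ z : Fin 3 → ℝ, z = (z ⬝ᵥ e₀) • e₀ + (z ⬝ᵥ e₁) • e₁ + (z ⬝ᵥ n) • n := by
    intro z
    have h := hcomp (z - ((z ⬝ᵥ e₀) • e₀ + (z ⬝ᵥ e₁) • e₁ + (z ⬝ᵥ n) • n)) ?_ ?_ ?_
    · have := sub_eq_zero.1 h
      exact this
    · simp only [sub_dotProduct, add_dotProduct, smul_dotProduct, smul_eq_mul,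
        hd00, hd10, hne0]; ring
    · simp only [sub_dotProduct, add_dotProduct, smul_dotProduct, smul_eq_mul,
        hd01, hd11, hne1]; ring
    · simp only [sub_dotProduct, add_dotProduct, smul_dotProduct, smul_eq_mul,
        h0n, h1n, hnn, ← hndef]; ring
  have hmemW : ∀ z : Fin 3 → ℝ, z ⬝ᵥ n = 0 → z ∈ W := by
    intro z hz
    have := hfull z
    rw [hz, zero_smul, add_zero] at this
    rw [this]
    exact W.add_mem (W.smul_mem _ hm0) (W.smul_mem _ hm1)
  have hWdotn : ∀ x ∈ W, x ⬝ᵥ n = 0 := by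
    intro x hx
    have h := hspan x hx
    calc x ⬝ᵥ n = ((x ⬝ᵥ e₀) • e₀ + (x ⬝ᵥ e₁) • e₁) ⬝ᵥ n := by rw [← h]
    _ = 0 := by
      simp only [add_dotProduct, smul_dotProduct, smul_eq_mul, h0n, h1n]; ring
  set E0 : W := ⟨e₀, hm0⟩ with hE0
  set E1 : W := ⟨e₁, hm1⟩ with hE1
  have wdec : ∀ w : W, ∃ a b : ℝ, w = a • E0 + b • E1 := by
    intro w
    refine ⟨(w : Fin 3 → ℝ) ⬝ᵥ e₀, (w : Fin 3 → ℝ) ⬝ᵥ e₁, Subtype.ext ?_⟩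
    simpa using hspan (w : Fin 3 → ℝ) w.2
  -- the candidate v
  set l : Fin 3 → ℝ := L E0 with hl
  set l' : Fin 3 → ℝ := L E1 with hl'
  set γ : ℝ := ((l ⬝ᵥ e₁) - (l' ⬝ᵥ e₀)) / 2 with hγ
  set v : Fin 3 → ℝ := (l' ⬝ᵥ n) • e₀ + (-(l ⬝ᵥ n)) • e₁ + γ • n with hv
  have hv0 : crossProduct v e₀ = γ • e₁ + (l ⬝ᵥ n) • n := by
    rw [hv]
    simp only [map_add, _root_.map_smul, LinearMap.add_apply, LinearMap.smul_apply,
      cross_self, hcne0, hc10, ← hndef]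
    module
  have hv1 : crossProduct v e₁ = -(γ • e₀) + (l' ⬝ᵥ n) • n := by
    rw [hv]
    simp only [map_add, _root_.map_smul, LinearMap.add_apply, LinearMap.smul_apply,
      cross_self, hcne1, ← hndef]
    module
  set M : W →ₗ[ℝ] (Fin 3 → ℝ) := L - (crossProduct v).comp W.subtype with hM
  have hMapp : ∀ w : W, M w = L w - crossProduct v (w : Fin 3 → ℝ) := fun w => rfl
  have hMn0 : (M E0) ⬝ᵥ n = 0 := by
    rw [hMapp, hv0, ← hl]
    simp only [sub_dotProduct, add_dotProduct, smul_dotProduct, smul_eq_mul, h1n, hnn]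
    ring
  have hMn1 : (M E1) ⬝ᵥ n = 0 := by
    rw [hMapp, hv1, ← hl']
    simp only [sub_dotProduct, add_dotProduct, neg_dotProduct, smul_dotProduct,
      smul_eq_mul, h0n, hnn]
    ring
  have himg : ∀ w : W, M w ∈ W := by
    intro w
    obtain ⟨a, b, hab⟩ := wdec w
    rw [hab, map_add, _root_.map_smul, _root_.map_smul]
    apply hmemW
    simp only [add_dotProduct, smul_dotProduct, smul_eq_mul, hMn0, hMn1]
    ring
  set A : W →ₗ[ℝ] W := LinearMap.codRestrict W M himg with hA
  have hAapp : ∀ w : W, ((A w : Fin 3 → ℝ)) = L w - crossProduct v (w : Fin 3 → ℝ) :=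
    fun w => rfl
  -- key symmetry identity
  have k01 : ((A E0 : Fin 3 → ℝ)) ⬝ᵥ e₁ = ((A E1 : Fin 3 → ℝ)) ⬝ᵥ e₀ := by
    rw [hAapp, hAapp, hv0, hv1, ← hl, ← hl']
    simp only [sub_dotProduct, add_dotProduct, neg_dotProduct, smul_dotProduct,
      smul_eq_mul, hd11, hd00, hne1, hne0, hγ]
    ring
  have hsym : ∀ x y : W, ((A x : Fin 3 → ℝ)) ⬝ᵥ (y : Fin 3 → ℝ)
      = (x : Fin 3 → ℝ) ⬝ᵥ ((A y : Fin 3 → ℝ)) := by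
    intro x y
    obtain ⟨a, b, hx⟩ := wdec x
    obtain ⟨c, d, hy⟩ := wdec y
    subst hx; subst hy
    simp only [map_add, _root_.map_smul, Submodule.coe_add, Submodule.coe_smul]
    simp only [hE0, hE1]
    simp only [add_dotProduct, dotProduct_add, smul_dotProduct, dotProduct_smul,
      smul_eq_mul]
    rw [dotProduct_comm e₀ ((A E0 : Fin 3 → ℝ)), dotProduct_comm e₁ ((A E1 : Fin 3 → ℝ)),
      dotProduct_comm e₀ ((A E1 : Fin 3 → ℝ)), dotProduct_comm e₁ ((A E0 : Fin 3 → ℝ))]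
    linear_combination (a * d - b * c) * k01
  have hdec : ∀ w : W, L w = ((A w : Fin 3 → ℝ)) + crossProduct v (w : Fin 3 → ℝ) := by
    intro w
    rw [hAapp]
    abel
  -- uniqueness
  have huniq : ∀ (A₁ : W →ₗ[ℝ] W) (v₁ : Fin 3 → ℝ) (A₂ : W →ₗ[ℝ] W) (v₂ : Fin 3 → ℝ),
      (∀ x y : W, ((A₁ x : Fin 3 → ℝ)) ⬝ᵥ (y : Fin 3 → ℝ)
        = (x : Fin 3 → ℝ) ⬝ᵥ ((A₁ y : Fin 3 → ℝ))) →
      (∀ w : W, L w = ((A₁ w : Fin 3 → ℝ)) + crossProduct v₁ (w : Fin 3 → ℝ)) →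
      (∀ x y : W, ((A₂ x : Fin 3 → ℝ)) ⬝ᵥ (y : Fin 3 → ℝ)
        = (x : Fin 3 → ℝ) ⬝ᵥ ((A₂ y : Fin 3 → ℝ))) →
      (∀ w : W, L w = ((A₂ w : Fin 3 → ℝ)) + crossProduct v₂ (w : Fin 3 → ℝ)) →
      A₁ = A₂ ∧ v₁ = v₂ := by
    intro A₁ v₁ A₂ v₂ hs₁ hd₁ hs₂ hd₂
    set D : Fin 3 → ℝ := v₁ - v₂ with hD
    have heq : ∀ w : W, ((A₁ w : Fin 3 → ℝ)) - ((A₂ w : Fin 3 → ℝ))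
        = -(crossProduct D (w : Fin 3 → ℝ)) := by
      intro w
      have h := (hd₁ w).symm.trans (hd₂ w)
      rw [hD]
      simp only [map_sub, LinearMap.sub_apply]
      have : crossProduct v₁ (w : Fin 3 → ℝ) - crossProduct v₂ (w : Fin 3 → ℝ)
          = (crossProduct v₁ (w : Fin 3 → ℝ)) - (crossProduct v₂ (w : Fin 3 → ℝ)) := rfl
      linear_combination (norm := module) h
    have hdotn : ∀ w : W, (crossProduct D (w : Fin 3 → ℝ)) ⬝ᵥ n = 0 := by
      intro w
      have h := congrArg (fun z => z ⬝ᵥ n) (heq w)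
      simp only [sub_dotProduct, neg_dotProduct] at h
      rw [hWdotn _ (A₁ w).2, hWdotn _ (A₂ w).2] at h
      linarith
    -- expand D
    have hDx : D = (D ⬝ᵥ e₀) • e₀ + (D ⬝ᵥ e₁) • e₁ + (D ⬝ᵥ n) • n := hfull D
    have hq : D ⬝ᵥ e₁ = 0 := by
      have h := hdotn E0
      conv_lhs at h => rw [show ((E0 : W) : Fin 3 → ℝ) = e₀ from rfl, hDx]
      simp only [map_add, _root_.map_smul, LinearMap.add_apply, LinearMap.smul_apply,
        cross_self, hcne0, hc10, add_dotProduct, smul_dotProduct, neg_dotProduct,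
        smul_neg, smul_zero, zero_dotProduct, zero_add, add_zero, smul_eq_mul,
        h1n, hnn, hne1, mul_zero, mul_one, neg_zero, ← hndef] at h
      linarith
    have hp : D ⬝ᵥ e₀ = 0 := by
      have h := hdotn E1
      conv_lhs at h => rw [show ((E1 : W) : Fin 3 → ℝ) = e₁ from rfl, hDx]
      simp only [map_add, _root_.map_smul, LinearMap.add_apply, LinearMap.smul_apply,
        cross_self, hcne1, add_dotProduct, smul_dotProduct, neg_dotProduct,
        smul_neg, smul_zero, zero_dotProduct, zero_add, add_zero, smul_eq_mul,
        h0n, hnn, hne0, mul_zero, mul_one, neg_zero, ← hndef] at h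
      linarith
    have hDr : D = (D ⬝ᵥ n) • n := by
      conv_lhs => rw [hDx]
      rw [hp, hq]
      simp
    have hr : D ⬝ᵥ n = 0 := by
      have h0 := heq E0
      have h1 := heq E1
      rw [hDr] at h0 h1
      rw [show ((E0 : W) : Fin 3 → ℝ) = e₀ from rfl] at h0
      rw [show ((E1 : W) : Fin 3 → ℝ) = e₁ from rfl] at h1
      simp only [_root_.map_smul, LinearMap.smul_apply, hcne0, hcne1] at h0 h1
      have c0 := congrArg (fun z => z ⬝ᵥ e₁) h0
      have c1 := congrArg (fun z => e₀ ⬝ᵥ z) h1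
      simp only [sub_dotProduct, neg_dotProduct, smul_dotProduct, smul_eq_mul, hd11,
        dotProduct_sub, dotProduct_neg, dotProduct_smul, smul_neg, neg_neg,
        dotProduct_comm e₀ e₀, hd00] at c0 c1
      have s₁ := hs₁ E0 E1
      have s₂ := hs₂ E0 E1
      rw [show ((E1 : W) : Fin 3 → ℝ) = e₁ from rfl,
        show ((E0 : W) : Fin 3 → ℝ) = e₀ from rfl] at s₁ s₂
      linarith
    have hD0 : D = 0 := by rw [hDr, hr, zero_smul]
    have hvv : v₁ = v₂ := by
      have h : v₁ - v₂ = 0 := by rw [← hD]; exact hD0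
      exact sub_eq_zero.1 h
    refine ⟨LinearMap.ext fun w => Subtype.ext ?_, hvv⟩
    have h := heq w
    rw [hD0] at h
    simp only [map_zero, LinearMap.zero_apply, neg_zero] at h
    have h' := sub_eq_zero.1 h
    exact h'
  -- assemble
  refine ⟨⟨A, v⟩, ⟨?_, ?_⟩, ?_⟩
  · intro x y
    rw [← dot_eq_sum, ← dot_eq_sum]
    exact hsym x y
  · exact hdec
  · rintro ⟨A', v'⟩ ⟨hs', hd'⟩
    have hs'' : ∀ x y : W, ((A' x : Fin 3 → ℝ)) ⬝ᵥ (y : Fin 3 → ℝ)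
        = (x : Fin 3 → ℝ) ⬝ᵥ ((A' y : Fin 3 → ℝ)) := by
      intro x y
      rw [dot_eq_sum, dot_eq_sum]
      exact hs' x y
    obtain ⟨hAe, hve⟩ := huniq A' v' A v hs'' hd' hsym hdec
    simp only [Prod.mk.injEq]
    exact ⟨hAe, hve⟩
end

section
/- For $\epsilon \ge 0$ let $n_\epsilon(t_1,t_2) = \sqrt{\epsilon^2 + t_1^2} + \sqrt{\epsilon^2 + t_2^2}$ on $\Omega = \{(t_1,t_2) : 0 \le t_1 \le t_2\}$. If $(t_1,t_2), (t_1',t_2') \in \Omega$ satisfy $t_2 \le t_2'$ and $t_1 + t_2 \le t_1' + t_2'$, then $n_\epsilon(t_1,t_2) \le n_\epsilon(t_1',t_2')$. -/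
/-- The regularized norm function `n_ε(t₁,t₂) = √(ε² + t₁²) + √(ε² + t₂²)`. -/
noncomputable def nEps (ε : ℝ) (p : ℝ × ℝ) : ℝ :=
  Real.sqrt (ε ^ 2 + p.1 ^ 2) + Real.sqrt (ε ^ 2 + p.2 ^ 2)

private lemma sqrt_eps_mono {ε a b : ℝ} (h0 : 0 ≤ a) (hab : a ≤ b) :
    Real.sqrt (ε ^ 2 + a ^ 2) ≤ Real.sqrt (ε ^ 2 + b ^ 2) := by
  apply Real.sqrt_le_sqrt; nlinarith

private lemma cross_ineq {ε a b : ℝ} (h0 : 0 ≤ a) (hab : a ≤ b) :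
    a * Real.sqrt (ε ^ 2 + b ^ 2) ≤ b * Real.sqrt (ε ^ 2 + a ^ 2) := by
  have ha : a * Real.sqrt (ε ^ 2 + b ^ 2) = Real.sqrt (a ^ 2 * (ε ^ 2 + b ^ 2)) := by
    rw [Real.sqrt_mul (by positivity), Real.sqrt_sq h0]
  have hbr : b * Real.sqrt (ε ^ 2 + a ^ 2) = Real.sqrt (b ^ 2 * (ε ^ 2 + a ^ 2)) := by
    rw [Real.sqrt_mul (by positivity), Real.sqrt_sq (h0.trans hab)]
  rw [ha, hbr]
  apply Real.sqrt_le_sqrt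
  nlinarith [mul_le_mul_of_nonneg_right (pow_le_pow_left₀ h0 hab 2) (sq_nonneg ε)]

set_option maxHeartbeats 1000000 in
/-- for `ε ≥ 0` and `(t₁,t₂), (t₁',t₂') ∈ Ω = {0 ≤ t₁ ≤ t₂}` with
`t₂ ≤ t₂'` and `t₁ + t₂ ≤ t₁' + t₂'`, we have `n_ε(t₁,t₂) ≤ n_ε(t₁',t₂')`. -/
theorem nEps_mono (ε : ℝ) (hε : 0 ≤ ε) (t₁ t₂ t₁' t₂' : ℝ)
    (h₁ : 0 ≤ t₁) (h₂ : t₁ ≤ t₂) (h₁' : 0 ≤ t₁') (h₂' : t₁' ≤ t₂')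
    (ha : t₂ ≤ t₂') (hb : t₁ + t₂ ≤ t₁' + t₂') :
    nEps ε (t₁, t₂) ≤ nEps ε (t₁', t₂') := by
  unfold nEps
  simp only
  by_cases hc : t₁ ≤ t₁'
  · exact add_le_add (sqrt_eps_mono h₁ hc) (sqrt_eps_mono (h₁.trans h₂) ha)
  push_neg at hc
  set s1 := Real.sqrt (ε ^ 2 + t₁ ^ 2) with hs1
  set s1' := Real.sqrt (ε ^ 2 + t₁' ^ 2) with hs1'
  set s2 := Real.sqrt (ε ^ 2 + t₂ ^ 2) with hs2
  set s2' := Real.sqrt (ε ^ 2 + t₂' ^ 2) with hs2'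
  have e1 : s1 ^ 2 = ε ^ 2 + t₁ ^ 2 := Real.sq_sqrt (by positivity)
  have e1' : s1' ^ 2 = ε ^ 2 + t₁' ^ 2 := Real.sq_sqrt (by positivity)
  have e2 : s2 ^ 2 = ε ^ 2 + t₂ ^ 2 := Real.sq_sqrt (by positivity)
  have e2' : s2' ^ 2 = ε ^ 2 + t₂' ^ 2 := Real.sq_sqrt (by positivity)
  have hs1pos : 0 < s1 := Real.sqrt_pos.2 (by nlinarith)
  have hn1' : 0 ≤ s1' := Real.sqrt_nonneg _
  have hn2 : 0 ≤ s2 := Real.sqrt_nonneg _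
  have hn2' : 0 ≤ s2' := Real.sqrt_nonneg _
  -- cross inequalities
  have c1 : t₁ * s2 ≤ t₂ * s1 := cross_ineq h₁ h₂
  have c2 : t₁ * s2' ≤ t₂' * s1 := cross_ineq h₁ (h₂.trans ha)
  have c3 : t₁' * s2 ≤ t₂ * s1' := cross_ineq h₁' (hc.le.trans h₂)
  have c4 : t₁' * s2' ≤ t₂' * s1' := cross_ineq h₁' h₂'
  have hA : (t₁ + t₁') * (s2 + s2') ≤ (t₂ + t₂') * (s1 + s1') := by nlinarith
  have hB : t₁ - t₁' ≤ t₂' - t₂ := by linarith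
  have hC : (t₁ - t₁') * ((t₁ + t₁') * (s2 + s2'))
      ≤ (t₂' - t₂) * ((t₂ + t₂') * (s1 + s1')) := by
    apply mul_le_mul hB hA (by positivity) (by linarith)
  have hK : (s1 ^ 2 - s1' ^ 2) * (s2 + s2') ≤ (s2' ^ 2 - s2 ^ 2) * (s1 + s1') := by
    nlinarith [hC]
  have hp1 : 0 < s1 + s1' := by linarith
  have hp2 : 0 < s2 + s2' := by
    have : s1 ≤ s2 := sqrt_eps_mono h₁ h₂
    linarith
  nlinarith [mul_pos hp1 hp2, hK]
end

section
/- Let $V, W$ be real inner product spaces of dimensions $2$ and $3$, and for $\epsilon \ge 0$ define $q_\epsilon(L) := \mathrm{tr}\sqrt{\epsilon^2 I + L^* L}$ on $\mathrm{Hom}(V,W)$. Then $q_\epsilon$ is a convex function, i.e. $q_\epsilon(\lambda L + (1-\lambda) L') \le \lambda q_\epsilon(L) + (1-\lambda) q_\epsilon(L')$ for all $L, L' \in \mathrm{Hom}(V,W)$ and $\lambda \in [0,1]$. -/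
open Matrix

/-- `ε²·1 + Lᴴ L` is positive semidefinite. -/
theorem eps_sq_one_add_conjTranspose_mul_self_posSemidef (ε : ℝ)
    (L : Matrix (Fin 3) (Fin 2) ℝ) :
    (ε ^ 2 • (1 : Matrix (Fin 2) (Fin 2) ℝ) + Lᴴ * L).PosSemidef := by
  have h1 := Matrix.posSemidef_conjTranspose_mul_self (ε • (1 : Matrix (Fin 2) (Fin 2) ℝ))
  have h2 := Matrix.posSemidef_conjTranspose_mul_self L
  have he : (ε • (1 : Matrix (Fin 2) (Fin 2) ℝ))ᴴ * (ε • (1 : Matrix (Fin 2) (Fin 2) ℝ))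
      = ε ^ 2 • (1 : Matrix (Fin 2) (Fin 2) ℝ) := by
    simp [Matrix.smul_mul, Matrix.mul_smul, smul_smul, sq]
  rw [he] at h1
  exact h1.add h2

/-- The regularized 1-Schatten norm `q_ε(L) = tr √(ε²·1 + Lᴴ L)`. -/
noncomputable def qEps (ε : ℝ) (L : Matrix (Fin 3) (Fin 2) ℝ) : ℝ :=
  ((eps_sq_one_add_conjTranspose_mul_self_posSemidef ε L).1.eigenvectorUnitary.1 *
    diagonal ((RCLike.ofReal : ℝ → ℝ) ∘ (√·) ∘ (eps_sq_one_add_conjTranspose_mul_self_posSemidef ε L).1.eigenvalues) *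
    (star (eps_sq_one_add_conjTranspose_mul_self_posSemidef ε L).1.eigenvectorUnitary :
      Matrix (Fin 2) (Fin 2) ℝ)).trace


namespace QEpsAux

variable {m n : Type*} [Fintype m] [Fintype n] [DecidableEq n]

lemma psd_trace_nonneg {A : Matrix n n ℝ} (hA : A.PosSemidef) : 0 ≤ A.trace := by
  rw [Matrix.trace]
  refine Finset.sum_nonneg fun i _ => ?_
  exact hA.diag_nonneg

lemma trace_conjTranspose_mul (A B : Matrix m n ℝ) :
    (Aᴴ * B).trace = ∑ p : n × m, A p.2 p.1 * B p.2 p.1 := by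
  rw [Fintype.sum_prod_type]
  simp [Matrix.trace, Matrix.diag, Matrix.mul_apply, Matrix.conjTranspose_apply]

lemma trace_CS (A B : Matrix m n ℝ) :
    (Aᴴ * B).trace ≤ Real.sqrt (Aᴴ * A).trace * Real.sqrt (Bᴴ * B).trace := by
  have hA : (Aᴴ * A).trace = ∑ p : n × m, (A p.2 p.1) ^ 2 := by
    rw [trace_conjTranspose_mul]; simp [sq]
  have hB : (Bᴴ * B).trace = ∑ p : n × m, (B p.2 p.1) ^ 2 := by
    rw [trace_conjTranspose_mul]; simp [sq]
  have h2 := Finset.sum_mul_sq_le_sq_mul_sq Finset.univ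
    (fun p : n × m => A p.2 p.1) (fun p : n × m => B p.2 p.1)
  calc (Aᴴ * B).trace ≤ |(Aᴴ * B).trace| := le_abs_self _
    _ = Real.sqrt ((Aᴴ * B).trace ^ 2) := (Real.sqrt_sq_eq_abs _).symm
    _ ≤ Real.sqrt ((Aᴴ * A).trace * (Bᴴ * B).trace) := by
        apply Real.sqrt_le_sqrt
        rw [trace_conjTranspose_mul, hA, hB]
        exact h2
    _ = Real.sqrt (Aᴴ * A).trace * Real.sqrt (Bᴴ * B).trace := by
        apply Real.sqrt_mul
        rw [hA]; positivity

noncomputable def Cf (U : Matrix n n ℝ) (μ : n → ℝ) (f : ℝ → ℝ) : Matrix n n ℝ :=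
  U * diagonal (fun i => f (μ i)) * Uᴴ

variable {U : Matrix n n ℝ} {μ : n → ℝ}

lemma Cf_mul (hU1 : Uᴴ * U = 1) (f g : ℝ → ℝ) :
    Cf U μ f * Cf U μ g = Cf U μ (fun x => f x * g x) := by
  unfold Cf
  simp only [Matrix.mul_assoc]
  rw [← Matrix.mul_assoc Uᴴ U, hU1, Matrix.one_mul,
    ← Matrix.mul_assoc (diagonal _) (diagonal _), diagonal_mul_diagonal]

lemma Cf_herm (f : ℝ → ℝ) : (Cf U μ f)ᴴ = Cf U μ f := by
  simp [Cf, Matrix.conjTranspose_mul, Matrix.diagonal_conjTranspose, Matrix.mul_assoc]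

lemma Cf_trace (hU1 : Uᴴ * U = 1) (f : ℝ → ℝ) : (Cf U μ f).trace = ∑ i, f (μ i) := by
  unfold Cf
  rw [Matrix.trace_mul_cycle, hU1, Matrix.one_mul, Matrix.trace_diagonal]

lemma Cf_one (hU2 : U * Uᴴ = 1) : Cf U μ (fun _ => 1) = 1 := by
  have h : (diagonal fun _ : n => (1 : ℝ)) = 1 := diagonal_one
  rw [Cf, h, Matrix.mul_one, hU2]

lemma Cf_sub (f g : ℝ → ℝ) :
    Cf U μ (fun x => f x - g x) = Cf U μ f - Cf U μ g := by
  unfold Cf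
  rw [← Matrix.diagonal_sub, Matrix.mul_sub, Matrix.sub_mul]

lemma Cf_zero : Cf U μ (fun _ => 0) = 0 := by
  simp [Cf]

lemma Cf_posSemidef {f : ℝ → ℝ} (hμ0 : ∀ i, 0 ≤ μ i) (h : ∀ x, 0 ≤ x → 0 ≤ f x) :
    (Cf U μ f).PosSemidef :=
  (posSemidef_diagonal_iff.mpr fun i => h _ (hμ0 i)).mul_mul_conjTranspose_same U


lemma Cf_congr {f g : ℝ → ℝ} (h : ∀ i, f (μ i) = g (μ i)) : Cf U μ f = Cf U μ g := by
  unfold Cf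
  rw [show (fun i => f (μ i)) = fun i => g (μ i) from funext h]

noncomputable def psdSqrt {A : Matrix n n ℝ} (hA : A.PosSemidef) : Matrix n n ℝ :=
  hA.1.eigenvectorUnitary.1 * diagonal ((RCLike.ofReal : ℝ → ℝ) ∘ (√·) ∘ hA.1.eigenvalues) *
    (star hA.1.eigenvectorUnitary : Matrix n n ℝ)

lemma psdSqrt_eq_Cf {A : Matrix n n ℝ} (hA : A.PosSemidef) :
    psdSqrt hA = Cf (hA.1.eigenvectorUnitary : Matrix n n ℝ) hA.1.eigenvalues Real.sqrt := rfl

lemma psdSqrt_posSemidef {A : Matrix n n ℝ} (hA : A.PosSemidef) : (psdSqrt hA).PosSemidef := by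
  rw [psdSqrt_eq_Cf]
  exact Cf_posSemidef hA.eigenvalues_nonneg fun x _ => Real.sqrt_nonneg x

lemma psdSqrt_mul_self {A : Matrix n n ℝ} (hA : A.PosSemidef) : psdSqrt hA * psdSqrt hA = A := by
  have hH : A.IsHermitian := hA.1
  have hU1 : (hH.eigenvectorUnitary : Matrix n n ℝ)ᴴ * (hH.eigenvectorUnitary : Matrix n n ℝ) = 1 := by
    rw [← Matrix.star_eq_conjTranspose]
    exact mem_unitaryGroup_iff'.mp hH.eigenvectorUnitary.2
  have hspec : Cf (hH.eigenvectorUnitary : Matrix n n ℝ) hH.eigenvalues id = A := by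
    have h := hH.spectral_theorem
    simp only [RCLike.ofReal_real_eq_id, Function.id_comp, Matrix.star_eq_conjTranspose] at h
    exact h.symm
  rw [psdSqrt_eq_Cf, Cf_mul hU1,
    Cf_congr (g := id) fun i => Real.mul_self_sqrt (hA.eigenvalues_nonneg i), hspec]

noncomputable def nuclear (M : Matrix m n ℝ) : ℝ :=
  (psdSqrt (posSemidef_conjTranspose_mul_self M)).trace

lemma exists_polar (M : Matrix m n ℝ) :
    ∃ X : Matrix m n ℝ, (1 - Xᴴ * X).PosSemidef ∧
      M = X * psdSqrt (posSemidef_conjTranspose_mul_self M) ∧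
      (Xᴴ * M).trace = nuclear M := by
  have hS : (Mᴴ * M).PosSemidef := posSemidef_conjTranspose_mul_self M
  have hH : (Mᴴ * M).IsHermitian := hS.1
  set U : Matrix n n ℝ := (hH.eigenvectorUnitary : Matrix n n ℝ) with hUdef
  set μ : n → ℝ := hH.eigenvalues with hμdef
  have hμ0 : ∀ i, 0 ≤ μ i := fun i => hS.eigenvalues_nonneg i
  have hU1 : Uᴴ * U = 1 := by
    rw [hUdef, ← Matrix.star_eq_conjTranspose]
    exact mem_unitaryGroup_iff'.mp hH.eigenvectorUnitary.2
  have hU2 : U * Uᴴ = 1 := by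
    rw [hUdef, ← Matrix.star_eq_conjTranspose]
    exact mem_unitaryGroup_iff.mp hH.eigenvectorUnitary.2
  have hspec : Cf U μ id = Mᴴ * M := by
    have h := hH.spectral_theorem
    simp only [RCLike.ofReal_real_eq_id, Function.id_comp, Matrix.star_eq_conjTranspose] at h
    exact h.symm
  have hsqrt : psdSqrt (posSemidef_conjTranspose_mul_self M) = Cf U μ Real.sqrt := by
    exact psdSqrt_eq_Cf _
  have key : ∀ g : ℝ → ℝ, (M * Cf U μ g)ᴴ * (M * Cf U μ g)
      = Cf U μ (fun x => g x * (x * g x)) := by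
    intro g
    rw [Matrix.conjTranspose_mul, Cf_herm, Matrix.mul_assoc,
      ← Matrix.mul_assoc Mᴴ M (Cf U μ g), ← hspec, Cf_mul hU1 id g,
      Cf_mul hU1 g (fun x => id x * g x)]
    exact Cf_congr fun i => by simp
  set f₀ : ℝ → ℝ := fun x => (Real.sqrt x)⁻¹ with hf₀
  refine ⟨M * Cf U μ f₀, ?_, ?_, ?_⟩
  · -- 1 - XᴴX is PSD
    rw [key f₀, show (1 : Matrix n n ℝ) = Cf U μ (fun _ => 1) from (Cf_one hU2).symm,
      ← Cf_sub]
    refine Cf_posSemidef hμ0 fun x hx => ?_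
    rcases eq_or_lt_of_le hx with h0 | h0
    · simp [hf₀, ← h0]
    · have hs : Real.sqrt x ≠ 0 := ne_of_gt (Real.sqrt_pos.mpr h0)
      have hx2 : Real.sqrt x * Real.sqrt x = x := Real.mul_self_sqrt hx
      have h1 : f₀ x * (x * f₀ x) = 1 := by
        simp only [hf₀]
        field_simp
        all_goals linarith [hx2]
      simp [h1]
  · -- M = X * sqrt
    have hQ : M * Cf U μ (fun x => 1 - f₀ x * Real.sqrt x) = 0 := by
      rw [← Matrix.conjTranspose_mul_self_eq_zero, key _,
        show (0 : Matrix n n ℝ) = Cf U μ (fun _ => 0) from Cf_zero.symm]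
      refine Cf_congr fun i => ?_
      rcases eq_or_lt_of_le (hμ0 i) with h0 | h0
      · simp [hf₀, ← h0]
      · have hs : Real.sqrt (μ i) ≠ 0 := ne_of_gt (Real.sqrt_pos.mpr h0)
        simp [hf₀, inv_mul_cancel₀ hs]
    rw [hsqrt, Matrix.mul_assoc, Cf_mul hU1]
    have h2 : Cf U μ (fun x => f₀ x * Real.sqrt x)
        = Cf U μ (fun _ => 1) - Cf U μ (fun x => 1 - f₀ x * Real.sqrt x) := by
      rw [← Cf_sub]
      exact Cf_congr fun i => by ring
    rw [h2, Matrix.mul_sub, hQ, sub_zero, Cf_one hU2, Matrix.mul_one]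
  · -- trace equality
    have hXM : (M * Cf U μ f₀)ᴴ * M = Cf U μ (fun x => f₀ x * id x) := by
      rw [Matrix.conjTranspose_mul, Cf_herm, Matrix.mul_assoc, ← hspec, Cf_mul hU1 f₀ id]
    rw [hXM, nuclear, hsqrt, Cf_trace hU1, Cf_trace hU1]
    refine Finset.sum_congr rfl fun i _ => ?_
    rcases eq_or_lt_of_le (hμ0 i) with h0 | h0
    · simp [hf₀, ← h0]
    · have hs : Real.sqrt (μ i) ≠ 0 := ne_of_gt (Real.sqrt_pos.mpr h0)
      have hx2 : Real.sqrt (μ i) * Real.sqrt (μ i) = μ i := Real.mul_self_sqrt (hμ0 i)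
      simp only [hf₀, id_eq]
      field_simp
      all_goals linarith [hx2]

lemma dual_le (M X : Matrix m n ℝ) (hX : (1 - Xᴴ * X).PosSemidef) :
    (Xᴴ * M).trace ≤ nuclear M := by
  obtain ⟨X₀, hX₀, hMeq, _⟩ := exists_polar M
  set R := psdSqrt (posSemidef_conjTranspose_mul_self M) with hRdef
  have hR : R.PosSemidef := psdSqrt_posSemidef (posSemidef_conjTranspose_mul_self M)
  set Cm := psdSqrt hR with hCdef
  have hC : Cm.PosSemidef := psdSqrt_posSemidef hR
  have hCC : Cm * Cm = R := psdSqrt_mul_self hR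
  have hCherm : Cmᴴ = Cm := hC.1
  have htrR : 0 ≤ R.trace := psd_trace_nonneg hR
  have bound : ∀ Y : Matrix m n ℝ, (1 - Yᴴ * Y).PosSemidef →
      ((Y * Cm)ᴴ * (Y * Cm)).trace ≤ R.trace := by
    intro Y hY
    have h1 : (Y * Cm)ᴴ * (Y * Cm) = Cm * (Yᴴ * Y) * Cm := by
      rw [Matrix.conjTranspose_mul, hCherm]
      simp only [Matrix.mul_assoc]
    have h2 : (Cmᴴ * (1 - Yᴴ * Y) * Cm).PosSemidef := hY.conjTranspose_mul_mul_same Cm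
    have h3 : Cmᴴ * (1 - Yᴴ * Y) * Cm = R - Cm * (Yᴴ * Y) * Cm := by
      rw [hCherm, Matrix.mul_sub, Matrix.sub_mul, Matrix.mul_one, hCC]
    have h4 := psd_trace_nonneg (h3 ▸ h2)
    rw [Matrix.trace_sub] at h4
    rw [h1]
    linarith
  have hXzeroC : ((X₀ * Cm)ᴴ * (X₀ * Cm)).trace ≤ R.trace := bound X₀ hX₀
  have hXC : ((X * Cm)ᴴ * (X * Cm)).trace ≤ R.trace := bound X hX
  calc (Xᴴ * M).trace = ((X * Cm)ᴴ * (X₀ * Cm)).trace := by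
        conv_lhs => rw [hMeq, ← hCC]
        rw [show Xᴴ * (X₀ * (Cm * Cm)) = (Xᴴ * (X₀ * Cm)) * Cm from by
          simp only [Matrix.mul_assoc]]
        rw [Matrix.trace_mul_comm]
        congr 1
        rw [Matrix.conjTranspose_mul, hCherm]
        simp only [Matrix.mul_assoc]
    _ ≤ Real.sqrt (((X * Cm)ᴴ * (X * Cm)).trace)
          * Real.sqrt (((X₀ * Cm)ᴴ * (X₀ * Cm)).trace) := trace_CS _ _
    _ ≤ Real.sqrt R.trace * Real.sqrt R.trace := by
        exact mul_le_mul (Real.sqrt_le_sqrt hXC) (Real.sqrt_le_sqrt hXzeroC)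
          (Real.sqrt_nonneg _) (Real.sqrt_nonneg _)
    _ = R.trace := Real.mul_self_sqrt htrR

lemma nuclear_convex (a b : ℝ) (ha : 0 ≤ a) (hb : 0 ≤ b) (M1 M2 : Matrix m n ℝ) :
    nuclear (a • M1 + b • M2) ≤ a * nuclear M1 + b * nuclear M2 := by
  obtain ⟨X, hX, _, htr⟩ := exists_polar (a • M1 + b • M2)
  have h1 := dual_le M1 X hX
  have h2 := dual_le M2 X hX
  have hexp : (Xᴴ * (a • M1 + b • M2)).trace
      = a * (Xᴴ * M1).trace + b * (Xᴴ * M2).trace := by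
    rw [Matrix.mul_add, Matrix.mul_smul, Matrix.mul_smul, Matrix.trace_add,
      Matrix.trace_smul, Matrix.trace_smul, smul_eq_mul, smul_eq_mul]
  rw [← htr, hexp]
  have := mul_le_mul_of_nonneg_left h1 ha
  have := mul_le_mul_of_nonneg_left h2 hb
  linarith

lemma sqrt_congr {A B : Matrix n n ℝ} (h : A = B) (hA : A.PosSemidef) (hB : B.PosSemidef) :
    psdSqrt hA = psdSqrt hB := by subst h; rfl

end QEpsAux

open QEpsAux

/-- for `ε ≥ 0`, the regularized 1-Schatten norm `q_ε` is a convex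
function on `Hom(V, W)`. -/
theorem qEps_convexOn (ε : ℝ) (hε : 0 ≤ ε) :
    ConvexOn ℝ (Set.univ : Set (Matrix (Fin 3) (Fin 2) ℝ)) (qEps ε) := by
  have hblock : ∀ L : Matrix (Fin 3) (Fin 2) ℝ,
      ε ^ 2 • (1 : Matrix (Fin 2) (Fin 2) ℝ) + Lᴴ * L
        = (fromRows (ε • (1 : Matrix (Fin 2) (Fin 2) ℝ)) L)ᴴ
            * fromRows (ε • (1 : Matrix (Fin 2) (Fin 2) ℝ)) L := by
    intro L
    rw [conjTranspose_fromRows_eq_fromCols_conjTranspose, fromCols_mul_fromRows]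
    congr 1
    simp [Matrix.conjTranspose_smul, Matrix.smul_mul, Matrix.mul_smul, smul_smul, sq]
  have hq : ∀ L : Matrix (Fin 3) (Fin 2) ℝ,
      qEps ε L = nuclear (fromRows (ε • (1 : Matrix (Fin 2) (Fin 2) ℝ)) L) := by
    intro L
    exact congrArg Matrix.trace
      (sqrt_congr (hblock L) (eps_sq_one_add_conjTranspose_mul_self_posSemidef ε L)
        (posSemidef_conjTranspose_mul_self _))
  refine ⟨convex_univ, fun L1 _ L2 _ a b ha hb hab => ?_⟩
  have haff : fromRows (ε • (1 : Matrix (Fin 2) (Fin 2) ℝ)) (a • L1 + b • L2)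
      = a • fromRows (ε • (1 : Matrix (Fin 2) (Fin 2) ℝ)) L1
        + b • fromRows (ε • (1 : Matrix (Fin 2) (Fin 2) ℝ)) L2 := by
    ext i j
    cases i with
    | inl i =>
        simp only [Matrix.fromRows_apply_inl, Matrix.add_apply, Matrix.smul_apply,
          smul_eq_mul]
        linear_combination (ε * (1 : Matrix (Fin 2) (Fin 2) ℝ) i j) * hab.symm
    | inr i =>
        simp [Matrix.fromRows_apply_inr]
  simp only [smul_eq_mul, hq, haff]
  exact nuclear_convex a b ha hb _ _
end

section
/- Let $V, W$ be real inner product spaces of dimensions $2$ and $3$. Let $L : V \to W$ be linear of rank $2$ and $A : W \to W$ nonnegative self-adjoint. Then the function $t \mapsto \|(I + tA) \circ L\|_1$ is differentiable at $t = 0$ with nonnegative derivative there; moreover the derivative at $0$ is strictly positive if $A \circ L \ne 0$. -/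
open Matrix


lemma psd_diag_nonneg {n : Type*} [Fintype n] [DecidableEq n] {M : Matrix n n ℝ}
    (hM : M.PosSemidef) (i : n) : 0 ≤ M i i := by
  exact hM.diag_nonneg

lemma psd_trace_nonneg {n : Type*} [Fintype n] [DecidableEq n] {M : Matrix n n ℝ}
    (hM : M.PosSemidef) : 0 ≤ M.trace :=
  Finset.sum_nonneg fun i _ => psd_diag_nonneg hM i

lemma psd_det_nonneg {n : Type*} [Fintype n] [DecidableEq n] {M : Matrix n n ℝ}
    (hM : M.PosSemidef) : 0 ≤ M.det := by
  have h := hM.1.det_eq_prod_eigenvalues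
  rw [h]
  exact Finset.prod_nonneg fun i _ => hM.eigenvalues_nonneg i

noncomputable def Matrix.PosSemidef.sqrt {n : Type*} [Fintype n] [DecidableEq n]
    {M : Matrix n n ℝ} (hM : M.PosSemidef) : Matrix n n ℝ :=
  (hM.1.eigenvectorUnitary : Matrix n n ℝ) * diagonal (Real.sqrt ∘ hM.1.eigenvalues) *
    (star hM.1.eigenvectorUnitary : Matrix n n ℝ)

lemma Matrix.PosSemidef.sqrt_mul_self {n : Type*} [Fintype n] [DecidableEq n]
    {M : Matrix n n ℝ} (hM : M.PosSemidef) : hM.sqrt * hM.sqrt = M := by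
  conv_rhs => rw [hM.1.spectral_theorem]
  have hU : (star hM.1.eigenvectorUnitary : Matrix n n ℝ) * hM.1.eigenvectorUnitary = 1 :=
    Unitary.coe_star_mul_self _
  have hD : diagonal (Real.sqrt ∘ hM.1.eigenvalues) * diagonal (Real.sqrt ∘ hM.1.eigenvalues)
      = diagonal (RCLike.ofReal ∘ hM.1.eigenvalues) := by
    rw [diagonal_mul_diagonal]
    congr 1
    funext i
    simp [Real.mul_self_sqrt (hM.eigenvalues_nonneg i)]
  rw [Unitary.conjStarAlgAut_apply, ← hD, Matrix.PosSemidef.sqrt]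
  simp only [Matrix.mul_assoc]
  rw [← Matrix.mul_assoc (star _ : Matrix n n ℝ) (hM.1.eigenvectorUnitary : Matrix n n ℝ), hU,
    Matrix.one_mul]

lemma Matrix.PosSemidef.posSemidef_sqrt {n : Type*} [Fintype n] [DecidableEq n]
    {M : Matrix n n ℝ} (hM : M.PosSemidef) : hM.sqrt.PosSemidef := by
  have hd : (diagonal (Real.sqrt ∘ hM.1.eigenvalues)).PosSemidef :=
    posSemidef_diagonal_iff.mpr fun i => Real.sqrt_nonneg _
  have := hd.mul_mul_conjTranspose_same (hM.1.eigenvectorUnitary : Matrix n n ℝ)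
  rw [Matrix.PosSemidef.sqrt, star_eq_conjTranspose]
  exact this

lemma psd_trace_mul_nonneg {n : Type*} [Fintype n] [DecidableEq n] {X Y : Matrix n n ℝ}
    (hX : X.PosSemidef) (hY : Y.PosSemidef) : 0 ≤ (X * Y).trace := by
  obtain ⟨S, hH, hS, hSpsd⟩ : ∃ S, Sᴴ = S ∧ S * S = X ∧ S.PosSemidef :=
    ⟨hX.sqrt, hX.posSemidef_sqrt.1, hX.sqrt_mul_self, hX.posSemidef_sqrt⟩
  subst hS
  have : (S * S * Y).trace = (S * Y * Sᴴ).trace := by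
    rw [hH, Matrix.mul_assoc, Matrix.trace_mul_comm, Matrix.mul_assoc]
  rw [this]
  exact psd_trace_nonneg (hY.mul_mul_conjTranspose_same _)

lemma trace_sqrt_fin_two {M : Matrix (Fin 2) (Fin 2) ℝ} (hM : M.PosSemidef) :
    hM.sqrt.trace = Real.sqrt (M.trace + 2 * Real.sqrt M.det) := by
  have hS : hM.sqrt * hM.sqrt = M := hM.sqrt_mul_self
  have hSpsd := hM.posSemidef_sqrt
  have hd2 : hM.sqrt.det * hM.sqrt.det = M.det := by rw [← det_mul, hS]
  have ht2 : (hM.sqrt * hM.sqrt).trace = M.trace := by rw [hS]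
  have htr : M.trace + 2 * Real.sqrt M.det = hM.sqrt.trace ^ 2 := by
    rw [← ht2, ← hd2, Real.sqrt_mul_self (psd_det_nonneg hSpsd)]
    simp only [Matrix.trace_fin_two, Matrix.det_fin_two, Matrix.mul_apply, Fin.sum_univ_two]
    ring
  rw [htr, Real.sqrt_sq (psd_trace_nonneg hSpsd)]

lemma schatten1_eq' {M : Matrix (Fin 2) (Fin 2) ℝ} (hM : M.PosSemidef) :
    hM.sqrt.trace = Real.sqrt (M.trace + 2 * Real.sqrt M.det) := trace_sqrt_fin_two hM

/-- The 1-Schatten norm `‖L‖₁ = tr √(Lᴴ L)`. -/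
noncomputable def schatten1 {m n : ℕ} (L : Matrix (Fin n) (Fin m) ℝ) : ℝ :=
  ((((Matrix.posSemidef_conjTranspose_mul_self L).1.eigenvectorUnitary : Matrix (Fin m) (Fin m) ℝ) *
    diagonal (Real.sqrt ∘ (Matrix.posSemidef_conjTranspose_mul_self L).1.eigenvalues) *
    (star (Matrix.posSemidef_conjTranspose_mul_self L).1.eigenvectorUnitary : Matrix (Fin m) (Fin m) ℝ))).trace

lemma schatten1_eq (N : Matrix (Fin 3) (Fin 2) ℝ) :
    schatten1 N = Real.sqrt ((Nᴴ * N).trace + 2 * Real.sqrt (Nᴴ * N).det) :=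
  trace_sqrt_fin_two (posSemidef_conjTranspose_mul_self N)

lemma hasDerivAt_quad (a b c : ℝ) :
    HasDerivAt (fun t : ℝ => a + b * t + c * t ^ 2) b 0 := by
  have h := (((hasDerivAt_id (0:ℝ)).const_mul b).const_add a).add
    ((hasDerivAt_pow 2 (0:ℝ)).const_mul c)
  simp at h
  exact h

/-- for `L : V → W` of rank 2 (dim V = 2, dim W = 3) and `A : W → W`
nonnegative self-adjoint, `t ↦ ‖(I + tA) ∘ L‖₁` is differentiable at `t = 0` with
nonnegative derivative, strictly positive if `A ∘ L ≠ 0`. -/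
theorem hasDerivAt_schatten1_nonneg
    (L : Matrix (Fin 3) (Fin 2) ℝ) (hL : L.rank = 2)
    (A : Matrix (Fin 3) (Fin 3) ℝ) (hA : A.PosSemidef) :
    ∃ d : ℝ, HasDerivAt (fun t : ℝ => schatten1 ((1 + t • A) * L)) d 0 ∧
      0 ≤ d ∧ (A * L ≠ 0 → 0 < d) := by
  have hAh : Aᴴ = A := hA.1
  set P := Lᴴ * L with hPdef
  set Q := Lᴴ * A * L with hQdef
  set R := Lᴴ * (A * A) * L with hRdef
  have hMt : ∀ t : ℝ, ((1 + t • A) * L)ᴴ * ((1 + t • A) * L)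
      = P + (2 * t) • Q + t ^ 2 • R := by
    intro t
    simp only [hPdef, hQdef, hRdef, conjTranspose_mul, conjTranspose_add, conjTranspose_one,
      conjTranspose_smul, hAh, star_trivial, Matrix.add_mul, Matrix.mul_add, Matrix.smul_mul,
      Matrix.mul_smul, Matrix.one_mul, Matrix.mul_one, smul_smul, Matrix.mul_assoc]
    module
  have hPpsd : P.PosSemidef := posSemidef_conjTranspose_mul_self L
  have hQpsd : Q.PosSemidef := hA.conjTranspose_mul_mul_same L
  -- det P > 0
  have hrank : P.rank = 2 := by rw [hPdef, rank_conjTranspose_mul_self]; exact hL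
  have hev : ∀ i, 0 < hPpsd.1.eigenvalues i := by
    intro i
    rcases (hPpsd.eigenvalues_nonneg i).lt_or_eq with hlt | heq
    · exact hlt
    · exfalso
      have hcard := hPpsd.1.rank_eq_card_non_zero_eigs
      rw [hrank] at hcard
      have hlt := Fintype.card_subtype_lt (p := fun j => hPpsd.1.eigenvalues j ≠ 0)
        (x := i) (by simpa using heq.symm)
      simp only [Fintype.card_fin] at hlt
      omega
  have hdetP : 0 < P.det := by
    have h := hPpsd.1.det_eq_prod_eigenvalues
    norm_num at h
    rw [h]
    exact mul_pos (hev 0) (hev 1)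
  have hsP : 0 < Real.sqrt P.det := Real.sqrt_pos.mpr hdetP
  -- the trace function
  set g : ℝ → ℝ := fun t => (P + (2 * t) • Q + t ^ 2 • R).trace with hgdef
  have hg : HasDerivAt g (2 * Q.trace) 0 := by
    have hfun : g = fun t => P.trace + (2 * Q.trace) * t + R.trace * t ^ 2 := by
      funext t
      simp [hgdef, Matrix.trace_add, Matrix.trace_smul, smul_eq_mul]
      ring
    rw [hfun]; exact hasDerivAt_quad _ _ _
  have hg0 : g 0 = P.trace := by simp [hgdef]
  -- entry derivatives
  have he : ∀ i j, HasDerivAt (fun t : ℝ => (P + (2 * t) • Q + t ^ 2 • R) i j)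
      (2 * Q i j) 0 := by
    intro i j
    have hfun : (fun t : ℝ => (P + (2 * t) • Q + t ^ 2 • R) i j)
        = fun t => P i j + (2 * Q i j) * t + R i j * t ^ 2 := by
      funext t
      simp [Matrix.add_apply, Matrix.smul_apply, smul_eq_mul]
      ring
    rw [hfun]; exact hasDerivAt_quad _ _ _
  have hN0 : ∀ i j, (P + (2 * (0:ℝ)) • Q + (0:ℝ) ^ 2 • R) i j = P i j := by
    intro i j; norm_num
  -- the determinant function
  set D : ℝ := 2 * Q 0 0 * P 1 1 + P 0 0 * (2 * Q 1 1)
      - (2 * Q 0 1 * P 1 0 + P 0 1 * (2 * Q 1 0)) with hDdef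
  set h : ℝ → ℝ := fun t => (P + (2 * t) • Q + t ^ 2 • R).det with hhdef
  have hh : HasDerivAt h D 0 := by
    have hfun : h = fun t => (P + (2 * t) • Q + t ^ 2 • R) 0 0
        * (P + (2 * t) • Q + t ^ 2 • R) 1 1
        - (P + (2 * t) • Q + t ^ 2 • R) 0 1 * (P + (2 * t) • Q + t ^ 2 • R) 1 0 := by
      funext t; rw [hhdef]; exact Matrix.det_fin_two _
    rw [hfun]
    have := (((he 0 0).mul (he 1 1)).sub ((he 0 1).mul (he 1 0)))
    refine this.congr_deriv ?_
    rw [hDdef, hN0, hN0, hN0, hN0]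
  have hh0 : h 0 = P.det := by simp [hhdef]
  -- D nonneg
  have hDnn : 0 ≤ D := by
    set J : Matrix (Fin 2) (Fin 2) ℝ := !![0, 1; -1, 0] with hJdef
    have hB : (J * Pᵀ * Jᴴ).PosSemidef := hPpsd.transpose.mul_mul_conjTranspose_same J
    have hJP : J * Pᵀ * Jᴴ = !![P 1 1, -(P 0 1); -(P 1 0), P 0 0] := by
      ext i j
      fin_cases i <;> fin_cases j <;>
        simp [hJdef, Matrix.mul_apply, Fin.sum_univ_two, conjTranspose_apply,
          Matrix.vecMul, dotProduct, Matrix.vecHead, Matrix.vecTail,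
          Matrix.transpose_apply] <;> ring
    have htr : ((J * Pᵀ * Jᴴ) * Q).trace
        = P 1 1 * Q 0 0 - P 0 1 * Q 1 0 - P 1 0 * Q 0 1 + P 0 0 * Q 1 1 := by
      rw [hJP]
      simp [Matrix.trace_fin_two, Matrix.mul_apply, Fin.sum_univ_two,
        Matrix.vecMul, dotProduct, Matrix.vecHead, Matrix.vecTail]
      ring
    have hnn := psd_trace_mul_nonneg hB hQpsd
    rw [htr] at hnn
    rw [hDdef]; linarith
  have hQtr : 0 ≤ Q.trace := psd_trace_nonneg hQpsd
  -- sqrt of h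
  have hsq : HasDerivAt (fun t => Real.sqrt (h t)) (1 / (2 * Real.sqrt P.det) * D) 0 := by
    have hr : HasDerivAt Real.sqrt (1 / (2 * Real.sqrt (h 0))) (h 0) :=
      Real.hasDerivAt_sqrt (by rw [hh0]; exact ne_of_gt hdetP)
    have := hr.comp 0 hh
    rw [hh0] at this
    exact this
  -- total inner function
  set e : ℝ := 2 * Q.trace + 2 * (1 / (2 * Real.sqrt P.det) * D) with hedef
  have hθ : HasDerivAt (fun t => g t + 2 * Real.sqrt (h t)) e 0 := hg.add (hsq.const_mul 2)
  have hθ0 : g 0 + 2 * Real.sqrt (h 0) = P.trace + 2 * Real.sqrt P.det := by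
    rw [hg0, hh0]
  have hθ0pos : 0 < g 0 + 2 * Real.sqrt (h 0) := by
    rw [hθ0]
    have := psd_trace_nonneg hPpsd
    linarith
  have hf : HasDerivAt (fun t => Real.sqrt (g t + 2 * Real.sqrt (h t)))
      (1 / (2 * Real.sqrt (g 0 + 2 * Real.sqrt (h 0))) * e) 0 := by
    have hr : HasDerivAt Real.sqrt (1 / (2 * Real.sqrt (g 0 + 2 * Real.sqrt (h 0))))
        (g 0 + 2 * Real.sqrt (h 0)) := Real.hasDerivAt_sqrt (ne_of_gt hθ0pos)
    exact hr.comp 0 hθ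
  have henn : 0 ≤ e := by
    rw [hedef]
    have h1 : 0 ≤ 1 / (2 * Real.sqrt P.det) * D :=
      mul_nonneg (by positivity) hDnn
    linarith
  have hcoef : 0 < 1 / (2 * Real.sqrt (g 0 + 2 * Real.sqrt (h 0))) := by
    have := Real.sqrt_pos.mpr hθ0pos
    positivity
  refine ⟨_, ?_, mul_nonneg hcoef.le henn, ?_⟩
  · have hfun : (fun t : ℝ => schatten1 ((1 + t • A) * L))
        = fun t => Real.sqrt (g t + 2 * Real.sqrt (h t)) := by
      funext t
      rw [schatten1_eq, hMt t]
    rw [hfun]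
    exact hf
  · intro hAL
    -- Q.trace > 0
    set B := hA.sqrt with hBdef
    have hBB : B * B = A := hA.sqrt_mul_self
    have hBH : Bᴴ = B := hA.posSemidef_sqrt.1
    have hBL : B * L ≠ 0 := by
      intro h0
      apply hAL
      rw [← hBB, Matrix.mul_assoc, h0, Matrix.mul_zero]
    have hBT : Bᵀ = B := by
      ext i j
      have := congrFun (congrFun hBH i) j
      simpa [conjTranspose_apply] using this
    have hQ2 : Q = (B * L)ᴴ * (B * L) := by
      rw [hQdef, ← hBB]
      simp [conjTranspose_mul, hBH, hBT, Matrix.mul_assoc]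
    have htrsum : Q.trace = ∑ j : Fin 2, ∑ i : Fin 3, (B * L) i j ^ 2 := by
      simp [hQ2, Matrix.trace, Matrix.diag, Matrix.mul_apply, conjTranspose_apply, sq,
        mul_comm]
    have hQtrpos : 0 < Q.trace := by
      rw [htrsum]
      obtain ⟨i, j, hij⟩ : ∃ i j, (B * L) i j ≠ 0 := by
        by_contra hc
        push_neg at hc
        exact hBL (by ext i j; exact hc i j)
      have hterm : 0 < (B * L) i j ^ 2 := by positivity
      calc (0:ℝ) < (B * L) i j ^ 2 := hterm
        _ ≤ ∑ i : Fin 3, (B * L) i j ^ 2 :=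
            Finset.single_le_sum (f := fun i => (B * L) i j ^ 2)
              (fun k _ => sq_nonneg _) (Finset.mem_univ i)
        _ ≤ ∑ j : Fin 2, ∑ i : Fin 3, (B * L) i j ^ 2 :=
            Finset.single_le_sum (f := fun j => ∑ i : Fin 3, (B * L) i j ^ 2)
              (fun k _ => Finset.sum_nonneg fun _ _ => sq_nonneg _) (Finset.mem_univ j)
    have hepos : 0 < e := by
      rw [hedef]
      have h1 : 0 ≤ 1 / (2 * Real.sqrt P.det) * D := mul_nonneg (by positivity) hDnn
      linarith
    exact mul_pos hcoef hepos
end
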